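/- Let F(z,t) = exp((i/2)(kz + k³t + φ + iθ)) + exp(-(i/2)(kz + k³t + φ + iθ)) with k, φ, θ real. Then F satisfies the Hirota bilinear equations (D_t + D_z³) F₊·F₋ = 0 and D_z² F₊·F₋ = 0, where F₊(z,t) := F(z+K,t), F₋(z,t) := F(z-K,t), provided k = (2m+1)π/(2K) for some integer m. -/

import Mathlib

open Complex Real

/-- z-derivative of a function of (z,t). -/
noncomputable def dz (f : ℂ → ℂ → ℂ) : ℂ → ℂ → ℂ := fun z t => deriv (fun w => f w t) z

/-- t-derivative of a function of (z,t). -/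
noncomputable def dt (f : ℂ → ℂ → ℂ) : ℂ → ℂ → ℂ := fun z t => deriv (fun s => f z s) t

private lemma deriv_exp_lin (c d p q : ℂ) (z : ℂ) :
    deriv (fun w => p * Complex.exp (c * w + d) + q * Complex.exp (-(c * w + d))) z
      = c * p * Complex.exp (c * z + d) - c * q * Complex.exp (-(c * z + d)) := by
  have h : HasDerivAt (fun w : ℂ => c * w + d) c z := by
    simpa using ((hasDerivAt_id z).const_mul c).add_const d
  have h1 : HasDerivAt (fun w => p * Complex.exp (c * w + d) + q * Complex.exp (-(c * w + d)))
      (p * (Complex.exp (c * z + d) * c) + q * (Complex.exp (-(c * z + d)) * -c)) z :=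
    (h.cexp.const_mul p).add ((h.neg.cexp).const_mul q)
  rw [h1.deriv]; ring

lemma dz_form {g : ℂ → ℂ → ℂ} {c e f p q : ℂ}
    (h : ∀ w s, g w s = p * Complex.exp (c * w + e * s + f)
      + q * Complex.exp (-(c * w + e * s + f))) :
    ∀ w s, dz g w s = (c * p) * Complex.exp (c * w + e * s + f)
      + (-(c * q)) * Complex.exp (-(c * w + e * s + f)) := by
  intro w s
  have hfun : (fun w => g w s) = fun w => p * Complex.exp (c * w + (e * s + f))
      + q * Complex.exp (-(c * w + (e * s + f))) := by
    funext w
    rw [h w s, show c * w + e * s + f = c * w + (e * s + f) from by ring]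
  unfold dz
  rw [hfun, deriv_exp_lin,
    show c * w + (e * s + f) = c * w + e * s + f from by ring]
  ring

lemma dt_form {g : ℂ → ℂ → ℂ} {c e f p q : ℂ}
    (h : ∀ w s, g w s = p * Complex.exp (c * w + e * s + f)
      + q * Complex.exp (-(c * w + e * s + f))) :
    ∀ w s, dt g w s = (e * p) * Complex.exp (c * w + e * s + f)
      + (-(e * q)) * Complex.exp (-(c * w + e * s + f)) := by
  intro w s
  have hfun : (fun s => g w s) = fun s => p * Complex.exp (e * s + (c * w + f))
      + q * Complex.exp (-(e * s + (c * w + f))) := by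
    funext s
    rw [h w s, show c * w + e * s + f = e * s + (c * w + f) from by ring]
  unfold dt
  rw [hfun, deriv_exp_lin,
    show e * s + (c * w + f) = c * w + e * s + f from by ring]
  ring

/-- F(z,t) = e^{(i/2)(kz+k³t+φ+iθ)} + e^{-(i/2)(kz+k³t+φ+iθ)} with k = (2m+1)π/(2K)
    satisfies the Hirota bilinear mKdV equations
    (D_t + D_z³) F₊·F₋ = 0 and D_z² F₊·F₋ = 0, where F₊(z,t) = F(z+K,t), F₋(z,t) = F(z-K,t). -/
theorem hirota_bilinear_elliptic_mKdV (K : ℝ) (hK : 0 < K) (m : ℤ) (k φ θ : ℝ)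
    (hk : k = (2 * m + 1) * π / (2 * K))
    (F Fp Fm : ℂ → ℂ → ℂ)
    (hF : ∀ z t, F z t =
        Complex.exp ((Complex.I / 2) * (k * z + k ^ 3 * t + φ + Complex.I * θ))
      + Complex.exp (-((Complex.I / 2) * (k * z + k ^ 3 * t + φ + Complex.I * θ))))
    (hFp : ∀ z t, Fp z t = F (z + K) t)
    (hFm : ∀ z t, Fm z t = F (z - K) t) :
    ∀ z t : ℂ,
      (dt Fp z t * Fm z t - Fp z t * dt Fm z t
        + dz (dz (dz Fp)) z t * Fm z t - 3 * dz (dz Fp) z t * dz Fm z t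
        + 3 * dz Fp z t * dz (dz Fm) z t - Fp z t * dz (dz (dz Fm)) z t = 0)
      ∧ (dz (dz Fp) z t * Fm z t - 2 * dz Fp z t * dz Fm z t
          + Fp z t * dz (dz Fm) z t = 0) := by
  have hK0 : (K : ℂ) ≠ 0 := by
    exact_mod_cast (ne_of_gt hK)
  set a : ℂ := Complex.I / 2 * k with ha
  set e : ℂ := Complex.I / 2 * k ^ 3 with he
  set f : ℂ := Complex.I / 2 * (φ + Complex.I * θ) with hf
  have hFp' : ∀ w s, Fp w s = 1 * Complex.exp (a * w + e * s + (f + a * K))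
      + 1 * Complex.exp (-(a * w + e * s + (f + a * K))) := by
    intro w s
    rw [hFp w s, hF, one_mul, one_mul]
    have harg : (Complex.I / 2) * (k * (w + K) + k ^ 3 * s + φ + Complex.I * θ)
        = a * w + e * s + (f + a * K) := by
      rw [ha, he, hf]; ring
    rw [harg]
  have hFm' : ∀ w s, Fm w s = 1 * Complex.exp (a * w + e * s + (f - a * K))
      + 1 * Complex.exp (-(a * w + e * s + (f - a * K))) := by
    intro w s
    rw [hFm w s, hF, one_mul, one_mul]
    have harg : (Complex.I / 2) * (k * (w - K) + k ^ 3 * s + φ + Complex.I * θ)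
        = a * w + e * s + (f - a * K) := by
      rw [ha, he, hf]; ring
    rw [harg]
  have hdzFp := dz_form hFp'
  have hdz2Fp := dz_form hdzFp
  have hdz3Fp := dz_form hdz2Fp
  have hdtFp := dt_form hFp'
  have hdzFm := dz_form hFm'
  have hdz2Fm := dz_form hdzFm
  have hdz3Fm := dz_form hdz2Fm
  have hdtFm := dt_form hFm'
  intro z t
  set U : ℂ := Complex.exp (a * z + e * t + f) with hU
  set V : ℂ := Complex.exp (-(a * z + e * t + f)) with hV
  set A : ℂ := Complex.exp (a * K) with hA
  set B : ℂ := Complex.exp (-(a * K)) with hB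
  have hE1 : Complex.exp (a * z + e * t + (f + a * K)) = U * A := by
    rw [hU, hA, ← Complex.exp_add]; congr 1; ring
  have hE1' : Complex.exp (-(a * z + e * t + (f + a * K))) = V * B := by
    rw [hV, hB, ← Complex.exp_add]; congr 1; ring
  have hE2 : Complex.exp (a * z + e * t + (f - a * K)) = U * B := by
    rw [hU, hB, ← Complex.exp_add]; congr 1; ring
  have hE2' : Complex.exp (-(a * z + e * t + (f - a * K))) = V * A := by
    rw [hV, hA, ← Complex.exp_add]; congr 1; ring
  -- key algebraic facts
  have he4 : e = -4 * a ^ 3 := by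
    rw [he, ha]
    linear_combination (Complex.I * (k : ℂ) ^ 3 / 2) * Complex.I_sq
  have hAB : A * B = 1 := by
    rw [hA, hB, ← Complex.exp_add]; simp
  have hA4 : A ^ 4 = -1 := by
    have h4 : (4 : ℕ) * (a * K) = ((2 * m + 1 : ℤ) : ℂ) * (↑π * Complex.I) := by
      rw [ha, hk]
      push_cast
      field_simp
      ring
    rw [hA, ← Complex.exp_nat_mul, h4, Complex.exp_int_mul, Complex.exp_pi_mul_I]
    exact Odd.neg_one_zpow ⟨m, by ring⟩
  have hA2 : A ^ 2 + B ^ 2 = 0 := by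
    have hAne : A ≠ 0 := by rw [hA]; exact Complex.exp_ne_zero _
    have hmul : A ^ 2 * (A ^ 2 + B ^ 2) = 0 := by
      linear_combination hA4 + (A * B + 1) * hAB
    rcases mul_eq_zero.mp hmul with h | h
    · exact absurd h (pow_ne_zero 2 hAne)
    · exact h
  refine ⟨?_, ?_⟩
  · rw [hdtFp z t, hdtFm z t, hdz3Fp z t, hdz2Fp z t, hdzFp z t,
      hdz3Fm z t, hdz2Fm z t, hdzFm z t, hFp' z t, hFm' z t,
      hE1, hE1', hE2, hE2']
    linear_combination (2 * U * V * (A ^ 2 - B ^ 2)) * he4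
  · rw [hdz2Fp z t, hdzFp z t, hdz2Fm z t, hdzFm z t, hFp' z t, hFm' z t,
      hE1, hE1', hE2, hE2']
    linear_combination (4 * a ^ 2 * U * V) * hA2
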